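/- The Vandermonde determinant d_n(x_1, …, x_n) = ∏_{1 ≤ j < i ≤ n}(x_i - x_j) does not lie in the ideal J_n ⊂ ℤ[x_1, …, x_n] generated by the elementary symmetric polynomials σ_1, …, σ_n, for any n ≥ 2. -/

import Mathlib

open MvPolynomial

namespace Stmt13Aux

open Finset Equiv

variable {n : ℕ}

/-- The exponent vector `i ↦ σ i` (as naturals). -/
noncomputable def pexp (σ : Equiv.Perm (Fin n)) : Fin n →₀ ℕ :=
  Finsupp.equivFunOnFinite.symm fun i => (σ i : ℕ)

@[simp] lemma pexp_apply (σ : Equiv.Perm (Fin n)) (i : Fin n) : pexp σ i = (σ i : ℕ) := rfl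

lemma pexp_injective : Function.Injective (pexp (n := n)) := by
  intro σ τ h
  ext i
  have := congrArg (fun f : Fin n →₀ ℕ => f i) h
  simpa using this

/-- The signed staircase-coefficient functional. -/
noncomputable def L (f : MvPolynomial (Fin n) ℤ) : ℤ :=
  ∑ σ : Equiv.Perm (Fin n), (Equiv.Perm.sign σ : ℤ) * coeff (pexp σ) f

lemma L_finset_sum {α : Type*} (s : Finset α) (f : α → MvPolynomial (Fin n) ℤ) :
    L (∑ x ∈ s, f x) = ∑ x ∈ s, L (f x) := by
  simp only [L, MvPolynomial.coeff_sum, Finset.mul_sum]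
  exact Finset.sum_comm

lemma L_add (f g : MvPolynomial (Fin n) ℤ) : L (f + g) = L f + L g := by
  simp only [L, MvPolynomial.coeff_add, mul_add, Finset.sum_add_distrib]

/-- indicator finsupp of a finset -/
noncomputable def ind (S : Finset (Fin n)) : Fin n →₀ ℕ := ∑ i ∈ S, Finsupp.single i 1

lemma ind_apply (S : Finset (Fin n)) (j : Fin n) : ind S j = if j ∈ S then 1 else 0 := by
  classical
  simp [ind, Finsupp.finset_sum_apply, Finsupp.single_apply, Finset.sum_ite_eq' S j fun _ => 1]

lemma ind_le_iff (S : Finset (Fin n)) (σ : Equiv.Perm (Fin n)) :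
    ind S ≤ pexp σ ↔ ∀ i ∈ S, (σ i : ℕ) ≠ 0 := by
  rw [Finsupp.le_def]
  constructor
  · intro h i hi
    have := h i
    rw [ind_apply, if_pos hi, pexp_apply] at this
    omega
  · intro h i
    rw [ind_apply, pexp_apply]
    split
    · have := h i ‹_›; omega
    · omega

section Invo

variable (σ : Equiv.Perm (Fin n)) (S : Finset (Fin n))

/-- minimum value of `σ` on `S` -/
noncomputable def tm (hS : S.Nonempty) : Fin n := (S.image σ).min' (hS.image σ)

noncomputable def pp (hS : S.Nonempty) : Fin n := σ.symm (tm σ S hS)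

noncomputable def qq (hS : S.Nonempty) : Fin n :=
  σ.symm ⟨(tm σ S hS : ℕ) - 1, lt_of_le_of_lt (Nat.sub_le _ _) (tm σ S hS).isLt⟩

lemma pp_mem (hS : S.Nonempty) : pp σ S hS ∈ S := by
  obtain ⟨i, hi, hieq⟩ := Finset.mem_image.mp ((S.image σ).min'_mem (hS.image σ))
  have : pp σ S hS = i := by
    rw [pp, tm, ← hieq, Equiv.symm_apply_apply]
  rw [this]; exact hi

lemma sigma_pp (hS : S.Nonempty) : σ (pp σ S hS) = tm σ S hS := Equiv.apply_symm_apply _ _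

lemma tm_ne_zero (hS : S.Nonempty) (h0 : ∀ i ∈ S, (σ i : ℕ) ≠ 0) : (tm σ S hS : ℕ) ≠ 0 := by
  have := h0 _ (pp_mem σ S hS)
  rwa [sigma_pp] at this

lemma sigma_qq (hS : S.Nonempty) : (σ (qq σ S hS) : ℕ) = (tm σ S hS : ℕ) - 1 := by
  rw [qq, Equiv.apply_symm_apply]

lemma qq_not_mem (hS : S.Nonempty) (h0 : ∀ i ∈ S, (σ i : ℕ) ≠ 0) : qq σ S hS ∉ S := by
  intro hq
  have h1 : σ (qq σ S hS) ∈ S.image σ := Finset.mem_image_of_mem _ hq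
  have h2 : tm σ S hS ≤ σ (qq σ S hS) := (S.image σ).min'_le _ h1
  have h3 := sigma_qq σ S hS
  have h4 := tm_ne_zero σ S hS h0
  rw [Fin.le_def] at h2
  omega

lemma pp_ne_qq (hS : S.Nonempty) (h0 : ∀ i ∈ S, (σ i : ℕ) ≠ 0) : pp σ S hS ≠ qq σ S hS :=
  fun h => qq_not_mem σ S hS h0 (h ▸ pp_mem σ S hS)

end Invo

open scoped Classical in
/-- The sign-reversing involution. -/
noncomputable def invo (a : Equiv.Perm (Fin n) × Finset (Fin n)) :
    Equiv.Perm (Fin n) × Finset (Fin n) :=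
  if h : a.2.Nonempty ∧ ∀ i ∈ a.2, (a.1 i : ℕ) ≠ 0 then
    (a.1 * Equiv.swap (pp a.1 a.2 h.1) (qq a.1 a.2 h.1),
      insert (qq a.1 a.2 h.1) (a.2.erase (pp a.1 a.2 h.1)))
  else a

section InvoProps

variable (σ : Equiv.Perm (Fin n)) (S : Finset (Fin n))
  (hS : S.Nonempty) (h0 : ∀ i ∈ S, (σ i : ℕ) ≠ 0)

include hS h0

lemma invo_eq :
    invo (σ, S) = (σ * Equiv.swap (pp σ S hS) (qq σ S hS),
      insert (qq σ S hS) (S.erase (pp σ S hS))) := by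
  rw [invo, dif_pos (show (σ, S).2.Nonempty ∧ ∀ i ∈ (σ, S).2, ((σ, S).1 i : ℕ) ≠ 0 from ⟨hS, h0⟩)]

lemma invo_card : (invo (σ, S)).2.card = S.card := by
  rw [invo_eq σ S hS h0]
  have h1 : qq σ S hS ∉ S.erase (pp σ S hS) := fun h =>
    qq_not_mem σ S hS h0 (Finset.mem_of_mem_erase h)
  simp only
  rw [Finset.card_insert_of_notMem h1, Finset.card_erase_of_mem (pp_mem σ S hS)]
  have := Finset.card_pos.mpr hS
  omega

lemma invo_fst_apply_pp : ((invo (σ, S)).1 (pp σ S hS) : ℕ) = (tm σ S hS : ℕ) - 1 := by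
  rw [invo_eq σ S hS h0]
  simp only [Equiv.Perm.mul_apply, Equiv.swap_apply_left]
  exact sigma_qq σ S hS

lemma invo_fst_apply_qq : (invo (σ, S)).1 (qq σ S hS) = tm σ S hS := by
  rw [invo_eq σ S hS h0]
  simp only [Equiv.Perm.mul_apply, Equiv.swap_apply_right]
  exact sigma_pp σ S hS

lemma invo_fst_apply_other {i : Fin n} (hip : i ≠ pp σ S hS) (hiq : i ≠ qq σ S hS) :
    (invo (σ, S)).1 i = σ i := by
  rw [invo_eq σ S hS h0]
  simp only [Equiv.Perm.mul_apply, Equiv.swap_apply_of_ne_of_ne hip hiq]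

lemma invo_snd_nonempty : (invo (σ, S)).2.Nonempty := by
  rw [invo_eq σ S hS h0]; exact Finset.insert_nonempty _ _

lemma invo_ne_zero : ∀ i ∈ (invo (σ, S)).2, (((invo (σ, S)).1) i : ℕ) ≠ 0 := by
  intro i hi
  rw [invo_eq σ S hS h0] at hi
  simp only at hi
  rcases Finset.mem_insert.mp hi with rfl | hi
  · rw [invo_fst_apply_qq σ S hS h0]
    exact tm_ne_zero σ S hS h0
  · have hip : i ≠ pp σ S hS := Finset.ne_of_mem_erase hi
    have hiq : i ≠ qq σ S hS := fun h =>
      qq_not_mem σ S hS h0 (h ▸ Finset.mem_of_mem_erase hi)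
    rw [invo_fst_apply_other σ S hS h0 hip hiq]
    exact h0 i (Finset.mem_of_mem_erase hi)

lemma invo_image : (invo (σ, S)).2.image (invo (σ, S)).1 = S.image σ := by
  have hq := qq_not_mem σ S hS h0
  conv_rhs => rw [← Finset.insert_erase (pp_mem σ S hS)]
  rw [show (invo (σ, S)).2 = insert (qq σ S hS) (S.erase (pp σ S hS)) from by
    rw [invo_eq σ S hS h0]]
  rw [Finset.image_insert, Finset.image_insert, invo_fst_apply_qq σ S hS h0, sigma_pp]
  congr 1
  apply Finset.image_congr
  intro i hi
  simp only [Finset.coe_erase, Set.mem_diff, Finset.mem_coe, Set.mem_singleton_iff] at hi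
  exact invo_fst_apply_other σ S hS h0 hi.2 (fun h => hq (h ▸ hi.1))

lemma invo_invo : invo (invo (σ, S)) = (σ, S) := by
  have hS' := invo_snd_nonempty σ S hS h0
  have h0' := invo_ne_zero σ S hS h0
  have htm : tm (invo (σ, S)).1 (invo (σ, S)).2 hS' = tm σ S hS := by
    simp only [tm, invo_image σ S hS h0]
  have hpp' : pp (invo (σ, S)).1 (invo (σ, S)).2 hS' = qq σ S hS := by
    rw [pp, htm, Equiv.symm_apply_eq]
    exact (invo_fst_apply_qq σ S hS h0).symm
  have hqq' : qq (invo (σ, S)).1 (invo (σ, S)).2 hS' = pp σ S hS := by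
    rw [qq, Equiv.symm_apply_eq]
    apply Fin.ext
    simp only
    rw [htm]
    exact (invo_fst_apply_pp σ S hS h0).symm
  have : invo (invo (σ, S)) = invo ((invo (σ, S)).1, (invo (σ, S)).2) := rfl
  rw [this, invo_eq _ _ hS' h0', hpp', hqq']
  refine Prod.ext ?_ ?_
  · show (invo (σ, S)).1 * Equiv.swap (qq σ S hS) (pp σ S hS) = σ
    rw [show (invo (σ, S)).1 = σ * Equiv.swap (pp σ S hS) (qq σ S hS) from by
      rw [invo_eq σ S hS h0]]
    rw [Equiv.swap_comm (qq σ S hS) (pp σ S hS), mul_assoc, Equiv.swap_mul_self, mul_one]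
  · show insert (pp σ S hS) ((invo (σ, S)).2.erase (qq σ S hS)) = S
    rw [show (invo (σ, S)).2 = insert (qq σ S hS) (S.erase (pp σ S hS)) from by
      rw [invo_eq σ S hS h0]]
    rw [Finset.erase_insert (fun h => qq_not_mem σ S hS h0 (Finset.mem_of_mem_erase h))]
    exact Finset.insert_erase (pp_mem σ S hS)

lemma invo_pexp_sub : pexp (invo (σ, S)).1 - ind (invo (σ, S)).2 = pexp σ - ind S := by
  have hS'eq : (invo (σ, S)).2 = insert (qq σ S hS) (S.erase (pp σ S hS)) := by
    rw [invo_eq σ S hS h0]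
  have hpq := pp_ne_qq σ S hS h0
  have hqS := qq_not_mem σ S hS h0
  have hpS := pp_mem σ S hS
  have htm0 := tm_ne_zero σ S hS h0
  ext i
  rw [Finsupp.tsub_apply, Finsupp.tsub_apply, pexp_apply, pexp_apply, ind_apply, ind_apply,
    hS'eq]
  rcases eq_or_ne i (pp σ S hS) with rfl | hip
  · have h1 := invo_fst_apply_pp σ S hS h0
    have h2 : (σ (pp σ S hS) : ℕ) = (tm σ S hS : ℕ) := congrArg Fin.val (sigma_pp σ S hS)
    rw [if_neg (by simp [Finset.mem_insert, hpq]), if_pos hpS, h1, h2]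
    omega
  · rcases eq_or_ne i (qq σ S hS) with rfl | hiq
    · have h1 : ((invo (σ, S)).1 (qq σ S hS) : ℕ) = (tm σ S hS : ℕ) :=
        congrArg Fin.val (invo_fst_apply_qq σ S hS h0)
      have h2 := sigma_qq σ S hS
      rw [if_pos (Finset.mem_insert_self _ _), if_neg hqS, h1, h2]
      omega
    · rw [invo_fst_apply_other σ S hS h0 hip hiq]
      by_cases hmem : i ∈ S
      · rw [if_pos hmem, if_pos (Finset.mem_insert_of_mem (Finset.mem_erase.mpr ⟨hip, hmem⟩))]
      · rw [if_neg hmem, if_neg (by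
          simp only [Finset.mem_insert, Finset.mem_erase]
          push_neg
          exact ⟨hiq, fun _ => hmem⟩)]

lemma invo_sign : (Equiv.Perm.sign (invo (σ, S)).1 : ℤ) = - Equiv.Perm.sign σ := by
  rw [invo_eq σ S hS h0]
  simp [Equiv.Perm.sign_swap (pp_ne_qq σ S hS h0)]

lemma invo_fst_ne : (invo (σ, S)).1 ≠ σ := by
  intro h
  have h1 := invo_fst_apply_qq σ S hS h0
  rw [h] at h1
  have h2 : σ (qq σ S hS) = σ (pp σ S hS) := by rw [h1, sigma_pp]
  exact pp_ne_qq σ S hS h0 (σ.injective h2.symm)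

end InvoProps

lemma invo_of_not (a : Equiv.Perm (Fin n) × Finset (Fin n))
    (h : ¬(a.2.Nonempty ∧ ∀ i ∈ a.2, (a.1 i : ℕ) ≠ 0)) : invo a = a := by
  rw [invo, dif_neg h]

lemma L_mul_esymm (k : ℕ) (hk : 1 ≤ k) (g : MvPolynomial (Fin n) ℤ) :
    L (g * esymm (Fin n) ℤ k) = 0 := by
  classical
  rw [esymm_eq_sum_monomial, Finset.mul_sum, L_finset_sum]
  simp only [L, coeff_mul_monomial']
  rw [Finset.sum_comm, ← Finset.sum_product']
  set F : Equiv.Perm (Fin n) × Finset (Fin n) → ℤ := fun a =>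
    (Equiv.Perm.sign a.1 : ℤ) *
      (if ind a.2 ≤ pexp a.1 then coeff (pexp a.1 - ind a.2) g else 0) with hF
  have hFeq : ∀ a : Equiv.Perm (Fin n) × Finset (Fin n),
      ((Equiv.Perm.sign a.1 : ℤ) *
        if (∑ i ∈ a.2, Finsupp.single i 1) ≤ pexp a.1 then
          coeff (pexp a.1 - ∑ i ∈ a.2, Finsupp.single i 1) g * 1 else 0) = F a := by
    intro a
    simp only [hF, mul_one]
    rfl
  rw [Finset.sum_congr rfl fun a _ => hFeq a]
  have key : ∀ a ∈ (Finset.univ : Finset (Equiv.Perm (Fin n))) ×ˢ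
      Finset.powersetCard k (Finset.univ : Finset (Fin n)), a.2.Nonempty := by
    intro a ha
    have := (Finset.mem_powersetCard.mp (Finset.mem_product.mp ha).2).2
    rw [← Finset.card_pos, this]
    omega
  refine Finset.sum_involution (fun a _ => invo a) ?_ ?_ ?_ ?_
  · intro a ha
    show F a + F (invo a) = 0
    have hS := key a ha
    by_cases h0 : ∀ i ∈ a.2, (a.1 i : ℕ) ≠ 0
    · obtain ⟨σ, S⟩ := a
      have e1 : F (σ, S) = (Equiv.Perm.sign σ : ℤ) * coeff (pexp σ - ind S) g := by
        simp only [hF, if_pos ((ind_le_iff S σ).mpr h0)]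
      have e2 : F (invo (σ, S)) =
          -(Equiv.Perm.sign σ : ℤ) * coeff (pexp σ - ind S) g := by
        simp only [hF]
        rw [if_pos ((ind_le_iff _ _).mpr (invo_ne_zero σ S hS h0)),
          invo_pexp_sub σ S hS h0, invo_sign σ S hS h0]
      rw [e1, e2]
      ring
    · rw [invo_of_not a (fun hc => h0 hc.2)]
      have : F a = 0 := by
        simp only [hF]
        rw [if_neg (fun hc => h0 ((ind_le_iff _ _).mp hc)), mul_zero]
      rw [this]
      ring
  · intro a ha hFa
    have hFa' : F a ≠ 0 := hFa
    have hS := key a ha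
    by_cases h0 : ∀ i ∈ a.2, (a.1 i : ℕ) ≠ 0
    · obtain ⟨σ, S⟩ := a
      intro hc
      exact invo_fst_ne σ S hS h0 (congrArg Prod.fst hc)
    · exact absurd (show F a = 0 by
        simp only [hF]
        rw [if_neg (fun hc => h0 ((ind_le_iff _ _).mp hc)), mul_zero]) hFa'
  · intro a ha
    have hS := key a ha
    rw [Finset.mem_product]
    refine ⟨Finset.mem_univ _, ?_⟩
    rw [Finset.mem_powersetCard_univ]
    show (invo a).2.card = k
    by_cases h0 : ∀ i ∈ a.2, (a.1 i : ℕ) ≠ 0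
    · obtain ⟨σ, S⟩ := a
      rw [invo_card σ S hS h0]
      exact (Finset.mem_powersetCard_univ.mp (Finset.mem_product.mp ha).2)
    · rw [invo_of_not a (fun hc => h0 hc.2)]
      exact (Finset.mem_powersetCard_univ.mp (Finset.mem_product.mp ha).2)
  · intro a ha
    show invo (invo a) = a
    have hS := key a ha
    by_cases h0 : ∀ i ∈ a.2, (a.1 i : ℕ) ≠ 0
    · obtain ⟨σ, S⟩ := a
      exact invo_invo σ S hS h0
    · rw [invo_of_not a (fun hc => h0 hc.2), invo_of_not a (fun hc => h0 hc.2)]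

lemma prod_X_pow_univ (u : Fin n →₀ ℕ) :
    (∏ j, (X j : MvPolynomial (Fin n) ℤ) ^ u j) = monomial u 1 := by
  rw [← MvPolynomial.prod_X_pow_eq_monomial]
  exact (Finset.prod_subset (Finset.subset_univ _)
    (fun x _ hx => by rw [Finsupp.notMem_support_iff.mp hx, pow_zero])).symm

lemma vandermonde_eq :
    (∏ i : Fin n, ∏ j ∈ Finset.univ.filter (fun j => j < i),
        ((X i : MvPolynomial (Fin n) ℤ) - X j))
      = (Matrix.vandermonde fun i => (X i : MvPolynomial (Fin n) ℤ)).det := by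
  rw [Matrix.det_vandermonde]
  exact Finset.prod_comm' (fun x y => by
    simp only [Finset.mem_filter, Finset.mem_univ, Finset.mem_Ioi, true_and, and_true])

lemma coeff_vandermonde (τ : Equiv.Perm (Fin n)) :
    coeff (pexp τ) ((Matrix.vandermonde fun i => (X i : MvPolynomial (Fin n) ℤ)).det)
      = (Equiv.Perm.sign τ : ℤ) := by
  classical
  rw [Matrix.det_apply']
  have hprod : ∀ σ : Equiv.Perm (Fin n),
      (∏ i, (Matrix.vandermonde fun i => (X i : MvPolynomial (Fin n) ℤ)) (σ i) i)
        = monomial (pexp σ⁻¹) 1 := by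
    intro σ
    have h1 : ∀ i : Fin n, (Matrix.vandermonde fun i => (X i : MvPolynomial (Fin n) ℤ)) (σ i) i
        = (fun j => (X j : MvPolynomial (Fin n) ℤ) ^ ((σ⁻¹ j : Fin n) : ℕ)) (σ i) := by
      intro i
      simp [Matrix.vandermonde_apply, Equiv.Perm.inv_def]
    rw [Finset.prod_congr rfl (fun i _ => h1 i),
      Equiv.prod_comp σ (fun j => (X j : MvPolynomial (Fin n) ℤ) ^ ((σ⁻¹ j : Fin n) : ℕ))]
    exact prod_X_pow_univ (pexp σ⁻¹)
  simp only [hprod]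
  have h2 : ∀ σ : Equiv.Perm (Fin n),
      ((Equiv.Perm.sign σ : ℤ) : MvPolynomial (Fin n) ℤ) * monomial (pexp σ⁻¹) 1
        = monomial (pexp σ⁻¹) ((Equiv.Perm.sign σ : ℤ)) := by
    intro σ
    rw [← eq_intCast (C : ℤ →+* MvPolynomial (Fin n) ℤ), C_mul_monomial, mul_one]
  rw [MvPolynomial.coeff_sum]
  rw [Finset.sum_congr rfl (fun σ _ => congrArg (coeff (pexp τ)) (h2 σ))]
  rw [Finset.sum_eq_single τ⁻¹]
  · rw [coeff_monomial, if_pos (by rw [inv_inv]), Equiv.Perm.sign_inv]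
  · intro σ _ hσ
    rw [coeff_monomial, if_neg, ]
    intro hc
    exact hσ (by rw [← inv_inv σ, pexp_injective hc])
  · intro h
    exact absurd (Finset.mem_univ _) h

lemma L_vandermonde :
    L (∏ i : Fin n, ∏ j ∈ Finset.univ.filter (fun j => j < i),
        ((X i : MvPolynomial (Fin n) ℤ) - X j)) = (n.factorial : ℤ) := by
  rw [vandermonde_eq, L]
  rw [Finset.sum_congr rfl (fun τ _ => by rw [coeff_vandermonde τ])]
  have h1 : ∀ τ : Equiv.Perm (Fin n),
      (Equiv.Perm.sign τ : ℤ) * (Equiv.Perm.sign τ : ℤ) = 1 := by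
    intro τ
    rw [← Units.val_mul, Int.units_mul_self, Units.val_one]
  rw [Finset.sum_congr rfl (fun τ _ => h1 τ), Finset.sum_const, Finset.card_univ,
    Fintype.card_perm, Fintype.card_fin, nsmul_eq_mul, mul_one]

end Stmt13Aux

open Stmt13Aux in
/-- For `n ≥ 2`, the Vandermonde product `∏_{j<i}(x_i - x_j)` does not lie in the ideal of
`ℤ[x_1, …, x_n]` generated by the elementary symmetric polynomials `σ_1, …, σ_n`. -/
theorem stmt13 (n : ℕ) (hn : 2 ≤ n) :
    (∏ i : Fin n, ∏ j ∈ Finset.univ.filter (fun j => j < i),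
        ((X i : MvPolynomial (Fin n) ℤ) - X j))
    ∉ Ideal.span ((fun j => (esymm (Fin n) ℤ j : MvPolynomial (Fin n) ℤ)) ''
        Set.Icc 1 n) := by
  intro hd
  have key : ∀ f ∈ Ideal.span ((fun j => (esymm (Fin n) ℤ j : MvPolynomial (Fin n) ℤ)) ''
      Set.Icc 1 n), ∀ r : MvPolynomial (Fin n) ℤ, L (r * f) = 0 := by
    intro f hf
    refine Submodule.span_induction ?_ ?_ ?_ ?_ hf
    · rintro x ⟨k, hk, rfl⟩ r
      exact L_mul_esymm k hk.1 r
    · intro r; simp [L]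
    · intro x y _ _ hx hy r
      rw [mul_add, L_add]
      rw [hx r, hy r, add_zero]
    · intro a x _ hx r
      rw [smul_eq_mul, ← mul_assoc]
      exact hx (r * a)
  have h1 := key _ hd 1
  rw [one_mul, L_vandermonde] at h1
  exact absurd h1 (by exact_mod_cast Nat.factorial_ne_zero n)
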